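/- arXiv:1808.06123 — 3 statements merged into one kernel-verified Lean document; each statement's English description precedes it below -/
import Mathlib

section
/- Let M > 1 be real and define g(z) = z·(z² + M²)^{−1/2} using the principal branch of the square root (which is well-defined and holomorphic on the strip |Im z| < M since Re(z²+M²) > 0 there). Then for every real τ: Im g(τ + i) = ∫₀¹ M² · Re( ((τ + i·s)² + M²)^{−3/2} ) ds; in particular Im g(τ+i) > 0 for all real τ. -/
open Complex intervalIntegral

private lemma re_w (M τ s : ℝ) :
    ((((τ : ℂ) + Complex.I * s) ^ 2 + (M : ℂ) ^ 2)).re = τ ^ 2 - s ^ 2 + M ^ 2 := by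
  simp [pow_two, Complex.add_re, Complex.mul_re, Complex.mul_im]

private lemma w_slit (M τ s : ℝ) (hM : 1 < M) (hs : s ∈ Set.Icc (0:ℝ) 1) :
    (((τ : ℂ) + Complex.I * s) ^ 2 + (M : ℂ) ^ 2) ∈ Complex.slitPlane := by
  left
  rw [re_w]
  nlinarith [hs.1, hs.2, sq_nonneg τ]

private lemma key_deriv (M τ : ℝ) (hM : 1 < M) (s : ℝ) (hs : s ∈ Set.Icc (0:ℝ) 1) :
    HasDerivAt (fun t : ℝ =>
      ((((τ : ℂ) + Complex.I * t) *
        ((((τ : ℂ) + Complex.I * t) ^ 2 + (M : ℂ) ^ 2) ^ (-(1/2) : ℂ))).im))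
      (M ^ 2 * ((((τ : ℂ) + Complex.I * s) ^ 2 + (M : ℂ) ^ 2) ^ (-(3/2) : ℂ)).re) s := by
  set z : ℂ := (τ : ℂ) + Complex.I * s with hz
  set w : ℂ := z ^ 2 + (M : ℂ) ^ 2 with hw
  have hslit : w ∈ Complex.slitPlane := w_slit M τ s hM hs
  have hw0 : w ≠ 0 := Complex.slitPlane_ne_zero hslit
  have hzd : HasDerivAt (fun t : ℝ => (τ : ℂ) + Complex.I * t) Complex.I s := by
    have h1 : HasDerivAt (fun t : ℝ => (t : ℂ)) 1 s := by
      exact Complex.ofRealCLM.hasDerivAt (x := s)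
    simpa using ((h1.const_mul Complex.I).const_add (τ : ℂ))
  have hwd : HasDerivAt (fun t : ℝ => ((τ : ℂ) + Complex.I * t) ^ 2 + (M : ℂ) ^ 2)
      (Complex.I * z + z * Complex.I) s := by
    have := (hzd.mul hzd).add_const ((M : ℂ) ^ 2)
    simpa [pow_two] using this
  have hcp : HasDerivAt (fun t : ℝ => (((τ : ℂ) + Complex.I * t) ^ 2 + (M : ℂ) ^ 2) ^ (-(1/2) : ℂ))
      ((Complex.I * z + z * Complex.I) * ((-(1/2) : ℂ) * w ^ ((-(1/2) : ℂ) - 1))) s := by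
    have hg := (Complex.hasStrictDerivAt_cpow_const (c := (-(1/2) : ℂ)) hslit).hasDerivAt
    simpa [smul_eq_mul, Function.comp_def] using hg.scomp s hwd
  have hF : HasDerivAt (fun t : ℝ => ((τ : ℂ) + Complex.I * t) *
      ((((τ : ℂ) + Complex.I * t) ^ 2 + (M : ℂ) ^ 2) ^ (-(1/2) : ℂ)))
      (Complex.I * (w ^ (-(1/2) : ℂ)) +
        z * ((Complex.I * z + z * Complex.I) * ((-(1/2) : ℂ) * w ^ ((-(1/2) : ℂ) - 1)))) s :=
    hzd.mul hcp
  have heq : Complex.I * (w ^ (-(1/2) : ℂ)) +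
      z * ((Complex.I * z + z * Complex.I) * ((-(1/2) : ℂ) * w ^ ((-(1/2) : ℂ) - 1))) =
      Complex.I * (((M : ℂ) ^ 2) * w ^ (-(3/2) : ℂ)) := by
    have e1 : ((-(1/2) : ℂ) - 1) = (-(3/2) : ℂ) := by norm_num
    have e2 : w ^ (-(1/2) : ℂ) = w ^ (1 : ℂ) * w ^ (-(3/2) : ℂ) := by
      rw [← Complex.cpow_add _ _ hw0]; norm_num
    rw [e1, e2, Complex.cpow_one, hw]
    ring
  rw [heq] at hF
  have him := Complex.imCLM.hasFDerivAt.comp_hasDerivAt s hF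
  have hre : (Complex.imCLM (Complex.I * (((M : ℂ) ^ 2) * w ^ (-(3/2) : ℂ)))) =
      M ^ 2 * ((w ^ (-(3/2) : ℂ)).re) := by
    simp [Complex.mul_im, Complex.mul_re, ← Complex.ofReal_pow]
  rw [hre] at him
  exact him

/-- For `M > 1` and `g(z) = z(z²+M²)^{-1/2}` (principal branch), for every real `τ`:
`Im g(τ+i) = ∫₀¹ M² Re(((τ+is)²+M²)^{-3/2}) ds`, and in particular `Im g(τ+i) > 0`. -/
theorem stmt_7 (M : ℝ) (hM : 1 < M) :
    ∀ τ : ℝ,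
      ((((τ : ℂ) + Complex.I) *
          ((((τ : ℂ) + Complex.I) ^ 2 + (M : ℂ) ^ 2) ^ (-(1/2) : ℂ))).im =
        ∫ s in (0:ℝ)..1,
          M ^ 2 * ((((τ : ℂ) + Complex.I * s) ^ 2 + (M : ℂ) ^ 2) ^ (-(3/2) : ℂ)).re) ∧
      0 < (((τ : ℂ) + Complex.I) *
          ((((τ : ℂ) + Complex.I) ^ 2 + (M : ℂ) ^ 2) ^ (-(1/2) : ℂ))).im := by
  intro τ
  have huIcc : Set.uIcc (0:ℝ) 1 = Set.Icc (0:ℝ) 1 := Set.uIcc_of_le (by norm_num)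
  have hpos : 0 < (((τ : ℂ) + Complex.I) *
      ((((τ : ℂ) + Complex.I) ^ 2 + (M : ℂ) ^ 2) ^ (-(1/2) : ℂ))).im := by
    set w : ℂ := ((τ : ℂ) + Complex.I) ^ 2 + (M : ℂ) ^ 2 with hw
    have hwre : w.re = τ ^ 2 - 1 + M ^ 2 := by
      have := re_w M τ 1
      simpa [hw] using this
    have hwre_pos : 0 < w.re := by rw [hwre]; nlinarith [sq_nonneg τ]
    have hw0 : w ≠ 0 := fun h => by simp [h] at hwre_pos
    set v : ℂ := w ^ ((1/2) : ℂ) with hv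
    have hvsq : v * v = w := by
      rw [hv, ← Complex.cpow_add _ _ hw0]
      norm_num
    have hvre : 0 < v.re := by
      rw [hv, Complex.cpow_def_of_ne_zero hw0]
      rw [Complex.exp_re]
      apply mul_pos (Real.exp_pos _)
      apply Real.cos_pos_of_mem_Ioo
      have harg : |w.arg| < Real.pi / 2 :=
        Complex.abs_arg_lt_pi_div_two_iff.mpr (Or.inl hwre_pos)
      have : (Complex.log w * (1/2 : ℂ)).im = w.arg * (1/2) := by
        simp [Complex.mul_im, Complex.log_im]
      rw [this]
      rw [abs_lt] at harg
      constructor <;> nlinarith [Real.pi_pos]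
    have hv0 : v ≠ 0 := fun h => by simp [h] at hvre
    have hN : 0 < Complex.normSq v := Complex.normSq_pos.mpr hv0
    have h1 : v.re * v.re - v.im * v.im = τ ^ 2 - 1 + M ^ 2 := by
      have := congrArg Complex.re hvsq
      simpa [Complex.mul_re, hwre] using this
    have h2 : v.re * v.im = τ := by
      have := congrArg Complex.im hvsq
      have hwim : w.im = 2 * τ := by
        simp [hw, pow_two, Complex.add_im, Complex.mul_im, Complex.mul_re]; ring
      rw [Complex.mul_im, hwim] at this
      linarith
    have ht : (v.re * v.im) * (v.re * v.im) = τ * τ := by rw [h2]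
    have key : v.re * v.re * (1 - v.im * v.im) = v.im * v.im + M ^ 2 - 1 := by
      linear_combination h1 - ht
    have hq : 0 < 1 - v.im * v.im := by
      nlinarith [mul_pos hvre hvre, sq_nonneg v.im]
    have hnum : 0 < v.re - τ * v.im := by
      have e : v.re - τ * v.im = v.re * (1 - v.im * v.im) := by rw [← h2]; ring
      rw [e]; exact mul_pos hvre hq
    have hrw : w ^ (-(1/2) : ℂ) = v⁻¹ := by
      rw [hv, ← Complex.cpow_neg]
    rw [hrw]
    have : (((τ : ℂ) + Complex.I) * v⁻¹).im = (v.re - τ * v.im) / Complex.normSq v := by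
      simp [Complex.mul_im, Complex.inv_re, Complex.inv_im, Complex.add_re, Complex.add_im]
      ring
    rw [this]
    exact div_pos hnum hN
  refine ⟨?_, hpos⟩
  have hcont : ContinuousOn (fun s : ℝ =>
      M ^ 2 * ((((τ : ℂ) + Complex.I * s) ^ 2 + (M : ℂ) ^ 2) ^ (-(3/2) : ℂ)).re)
      (Set.Icc (0:ℝ) 1) := by
    apply ContinuousOn.mul continuousOn_const
    apply Complex.continuous_re.comp_continuousOn
    intro s hs
    apply ContinuousAt.continuousWithinAt
    have hbase : Continuous (fun s : ℝ => ((τ : ℂ) + Complex.I * s) ^ 2 + (M : ℂ) ^ 2) := by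
      continuity
    exact ContinuousAt.comp (g := fun z : ℂ => z ^ (-(3/2) : ℂ))
      (f := fun s : ℝ => ((τ : ℂ) + Complex.I * s) ^ 2 + (M : ℂ) ^ 2)
      (continuousAt_cpow_const (w_slit M τ s hM hs)) hbase.continuousAt
  have hFTC := intervalIntegral.integral_eq_sub_of_hasDerivAt
    (f := fun t : ℝ => ((((τ : ℂ) + Complex.I * t) *
        ((((τ : ℂ) + Complex.I * t) ^ 2 + (M : ℂ) ^ 2) ^ (-(1/2) : ℂ))).im))
    (f' := fun s : ℝ => M ^ 2 * ((((τ : ℂ) + Complex.I * s) ^ 2 + (M : ℂ) ^ 2) ^ (-(3/2) : ℂ)).re)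
    (a := 0) (b := 1)
    (fun t ht => key_deriv M τ hM t (huIcc ▸ ht))
    ((hcont.intervalIntegrable_of_Icc (by norm_num)))
  rw [hFTC]
  have hb : ((τ : ℂ) ^ 2 + (M : ℂ) ^ 2) = ((τ ^ 2 + M ^ 2 : ℝ) : ℂ) := by push_cast; ring
  have hcp' : ((τ : ℂ) ^ 2 + (M : ℂ) ^ 2) ^ (-(1/2) : ℂ) =
      (((τ ^ 2 + M ^ 2 : ℝ) ^ (-(1/2) : ℝ) : ℝ) : ℂ) := by
    have h := Complex.ofReal_cpow (x := τ ^ 2 + M ^ 2) (by positivity) (-(1/2) : ℝ)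
    push_cast at h
    exact h.symm
  have hF0' : (((τ : ℂ)) * (((τ : ℂ) ^ 2 + (M : ℂ) ^ 2) ^ (-(1/2) : ℂ))).im = 0 := by
    rw [hcp', ← Complex.ofReal_mul]
    exact Complex.ofReal_im _
  simp only [Complex.ofReal_zero, Complex.ofReal_one, mul_zero, mul_one, add_zero]
  rw [hF0', sub_zero]
end

section
/- Let X, Y be Hilbert spaces, Z a normed space, ι : X → Z a compact linear operator, and (T_n) a sequence of bounded linear operators X → Y converging in operator norm to a bounded operator T₀ which is injective. Suppose there is C > 0 such that for all n and all u ∈ X: ‖u‖_X ≤ C·(‖T_n u‖_Y + ‖ι u‖_Z), and also ‖u‖_X ≤ C·(‖T₀ u‖_Y + ‖ι u‖_Z). Then there exist N and C′ > 0 such that for all n ≥ N and all u ∈ X: ‖u‖_X ≤ C′·‖T_n u‖_Y. -/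
open Filter

/-- Abstract compactness argument removing the error term: Hilbert spaces `X, Y`, a
compact operator `ι : X → Z`, operators `Tₙ → T₀` in norm with `T₀` injective, and
uniform estimates `‖u‖ ≤ C(‖Tₙ u‖ + ‖ι u‖)` (also for `T₀`) give a uniform estimate
`‖u‖ ≤ C′‖Tₙ u‖` for large `n`. -/
theorem stmt_16 {X Y Z : Type*}
    [NormedAddCommGroup X] [InnerProductSpace ℂ X] [CompleteSpace X]
    [NormedAddCommGroup Y] [InnerProductSpace ℂ Y] [CompleteSpace Y]
    [NormedAddCommGroup Z] [NormedSpace ℂ Z]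
    (ι : X →L[ℂ] Z) (hι : IsCompactOperator ι)
    (T : ℕ → X →L[ℂ] Y) (T₀ : X →L[ℂ] Y)
    (hconv : Tendsto (fun n => T n) atTop (nhds T₀))
    (hinj : Function.Injective T₀)
    (C : ℝ) (hC : 0 < C)
    (hest : ∀ n : ℕ, ∀ u : X, ‖u‖ ≤ C * (‖T n u‖ + ‖ι u‖))
    (hest₀ : ∀ u : X, ‖u‖ ≤ C * (‖T₀ u‖ + ‖ι u‖)) :
    ∃ N : ℕ, ∃ C' > (0 : ℝ), ∀ n ≥ N, ∀ u : X, ‖u‖ ≤ C' * ‖T n u‖ := by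
  by_contra h
  push_neg at h
  -- choose bad vectors
  choose n hn v hv using fun k : ℕ => h k (k + 1) (by positivity)
  have hv0 : ∀ k, v k ≠ 0 := by
    intro k hk
    have := hv k
    rw [hk] at this
    simp at this
  -- normalize
  set u : ℕ → X := fun k => (‖v k‖⁻¹ : ℂ) • v k with hu
  have hnu : ∀ k, ‖u k‖ = 1 := by
    intro k
    have h0 : ‖v k‖ ≠ 0 := norm_ne_zero_iff.mpr (hv0 k)
    simp [hu, norm_smul, inv_mul_cancel₀ h0]
  have hTu : ∀ k, ‖T (n k) (u k)‖ ≤ 1 / (k + 1) := by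
    intro k
    have h0 : (0 : ℝ) < ‖v k‖ := norm_pos_iff.mpr (hv0 k)
    have : ‖T (n k) (u k)‖ = ‖v k‖⁻¹ * ‖T (n k) (v k)‖ := by
      simp [hu, map_smul, norm_smul]
    have hk : (0:ℝ) < (k:ℝ) + 1 := by positivity
    rw [this, inv_mul_le_iff₀ h0, mul_one_div, le_div_iff₀ hk]
    nlinarith [(hv k).le]
  -- ‖T₀ (u k)‖ → 0
  have hnorm_conv : Tendsto (fun m => ‖T m - T₀‖) atTop (nhds 0) := by
    simpa [tendsto_iff_norm_sub_tendsto_zero] using hconv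
  have hnk : Tendsto n atTop atTop := tendsto_atTop_mono hn tendsto_id
  have hT0u : Tendsto (fun k => ‖T₀ (u k)‖) atTop (nhds 0) := by
    have hb : ∀ k, ‖T₀ (u k)‖ ≤ ‖T (n k) - T₀‖ + 1 / (k + 1) := by
      intro k
      have h1 : ‖T₀ (u k) - T (n k) (u k)‖ ≤ ‖T (n k) - T₀‖ := by
        have := (T (n k) - T₀).le_opNorm (u k)
        rw [hnu k, mul_one] at this
        simpa [norm_sub_rev] using this
      calc ‖T₀ (u k)‖ ≤ ‖T₀ (u k) - T (n k) (u k)‖ + ‖T (n k) (u k)‖ := by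
            simpa using norm_add_le (T₀ (u k) - T (n k) (u k)) (T (n k) (u k))
        _ ≤ ‖T (n k) - T₀‖ + 1 / (k + 1) := add_le_add h1 (hTu k)
    have hg : Tendsto (fun k => ‖T (n k) - T₀‖ + 1 / ((k:ℝ) + 1)) atTop (nhds 0) := by
      have h1 : Tendsto (fun k => ‖T (n k) - T₀‖) atTop (nhds 0) :=
        (hnorm_conv.comp hnk)
      have h2 : Tendsto (fun k : ℕ => 1 / ((k:ℝ) + 1)) atTop (nhds 0) :=
        tendsto_one_div_add_atTop_nhds_zero_nat
      simpa using h1.add h2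
    exact squeeze_zero (fun k => norm_nonneg _) hb hg
  -- compactness of ι: convergent subsequence of ι (u k)
  have hK : IsCompact (closure (ι '' Metric.closedBall 0 1)) :=
    hι.isCompact_closure_image_closedBall (𝕜₁ := ℂ) 1
  have hmem : ∀ k, ι (u k) ∈ closure (ι '' Metric.closedBall 0 1) := fun k =>
    subset_closure ⟨u k, by simp [Metric.mem_closedBall, dist_zero_right, (hnu k).le], rfl⟩
  obtain ⟨z, _, φ, hφ, hzconv⟩ := hK.tendsto_subseq hmem
  set w : ℕ → X := fun j => u (φ j) with hw
  have hT0w : Tendsto (fun j => ‖T₀ (w j)‖) atTop (nhds 0) :=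
    hT0u.comp hφ.tendsto_atTop
  have hιw : Tendsto (fun j => ‖ι (w j) - z‖) atTop (nhds 0) := by
    simpa [Function.comp] using tendsto_iff_norm_sub_tendsto_zero.mp hzconv
  -- w is Cauchy
  have hcauchy : CauchySeq w := by
    rw [Metric.cauchySeq_iff]
    intro ε hε
    have hf : Tendsto (fun j => C * (‖T₀ (w j)‖ + ‖ι (w j) - z‖)) atTop (nhds 0) := by
      have := (hT0w.add hιw).const_mul C
      simpa using this
    obtain ⟨N, hN⟩ := (hf.eventually (gt_mem_nhds (half_pos hε))).exists_forall_of_atTop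
    refine ⟨N, fun m hm l hl => ?_⟩
    have key : dist (w m) (w l) ≤
        C * (‖T₀ (w m)‖ + ‖ι (w m) - z‖) + C * (‖T₀ (w l)‖ + ‖ι (w l) - z‖) := by
      rw [dist_eq_norm]
      calc ‖w m - w l‖ ≤ C * (‖T₀ (w m - w l)‖ + ‖ι (w m - w l)‖) := hest₀ _
        _ ≤ C * ((‖T₀ (w m)‖ + ‖T₀ (w l)‖) + (‖ι (w m) - z‖ + ‖ι (w l) - z‖)) := by
            apply mul_le_mul_of_nonneg_left _ hC.le
            apply add_le_add
            · simpa [map_sub] using norm_sub_le (T₀ (w m)) (T₀ (w l))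
            · calc ‖ι (w m - w l)‖ = ‖(ι (w m) - z) - (ι (w l) - z)‖ := by
                    rw [map_sub]; congr 1; abel
                _ ≤ ‖ι (w m) - z‖ + ‖ι (w l) - z‖ := norm_sub_le _ _
        _ = C * (‖T₀ (w m)‖ + ‖ι (w m) - z‖) + C * (‖T₀ (w l)‖ + ‖ι (w l) - z‖) := by ring
    calc dist (w m) (w l) ≤ _ := key
      _ < ε / 2 + ε / 2 := add_lt_add (hN m hm) (hN l hl)
      _ = ε := add_halves ε
  obtain ⟨u₀, hu₀⟩ := cauchySeq_tendsto_of_complete hcauchy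
  -- ‖u₀‖ = 1
  have hnormu₀ : ‖u₀‖ = 1 := by
    have h1 : Tendsto (fun j => ‖w j‖) atTop (nhds ‖u₀‖) :=
      (continuous_norm.tendsto u₀).comp hu₀
    have h2 : Tendsto (fun j => ‖w j‖) atTop (nhds 1) := by
      simpa [hw, hnu] using tendsto_const_nhds (x := (1:ℝ)) (f := atTop (α := ℕ))
    exact tendsto_nhds_unique h1 h2
  -- T₀ u₀ = 0
  have hT0u₀ : T₀ u₀ = 0 := by
    have h1 : Tendsto (fun j => T₀ (w j)) atTop (nhds (T₀ u₀)) :=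
      (T₀.continuous.tendsto u₀).comp hu₀
    have h2 : Tendsto (fun j => T₀ (w j)) atTop (nhds 0) :=
      tendsto_zero_iff_norm_tendsto_zero.mpr hT0w
    exact tendsto_nhds_unique h1 h2
  have : u₀ = 0 := hinj (by simpa using hT0u₀)
  rw [this, norm_zero] at hnormu₀
  norm_num at hnormu₀
end

section
/- Let l be a nonzero real number and let u : (0,∞) → ℂ be continuously differentiable with compact support contained in (0,∞). Then ∫₀^∞ x^{−2l−1}·|u(x)|² dx ≤ (1/l²)·∫₀^∞ x^{−2l+1}·|u′(x)|² dx. -/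
open MeasureTheory Real Set

private lemma hardy_amgm (m p q : ℝ) (hm : 0 < m) : 2 * (p * q) ≤ m * p ^ 2 + m⁻¹ * q ^ 2 := by
  have h := two_mul_le_add_sq (m * p) q
  have hm' : m ≠ 0 := hm.ne'
  have h2 := mul_le_mul_of_nonneg_left h (inv_nonneg.mpr hm.le)
  calc 2 * (p * q) = m⁻¹ * (2 * (m * p) * q) := by field_simp
    _ ≤ m⁻¹ * ((m * p) ^ 2 + q ^ 2) := h2
    _ = m * p ^ 2 + m⁻¹ * q ^ 2 := by field_simp

set_option maxHeartbeats 1000000 in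
/-- Weighted Hardy inequality in b-form: for `l ≠ 0` and `u : ℝ → ℂ` continuously
differentiable with compact support contained in `(0,∞)`,
`∫₀^∞ x^{−2l−1}|u|² dx ≤ (1/l²) ∫₀^∞ x^{−2l+1}|u′|² dx`. -/
theorem stmt_19 (l : ℝ) (hl : l ≠ 0) (u : ℝ → ℂ)
    (hu : ContDiff ℝ 1 u) (hsupp : HasCompactSupport u)
    (hsupp' : tsupport u ⊆ Set.Ioi 0) :
    ∫ x in Set.Ioi (0 : ℝ), x ^ (-2 * l - 1) * ‖u x‖ ^ 2 ≤
      (1 / l ^ 2) * ∫ x in Set.Ioi (0 : ℝ), x ^ (-2 * l + 1) * ‖deriv u x‖ ^ 2 := by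
  by_cases hKe : tsupport u = ∅
  · have hu0 : u = 0 := by
      by_contra h
      obtain ⟨x, hx⟩ := Function.ne_iff.mp h
      have hmem : x ∈ tsupport u := subset_tsupport u (by simpa using hx)
      simp [hKe] at hmem
    rw [hu0]
    have hd : deriv (0 : ℝ → ℂ) = fun _ => 0 := by
      funext x; exact deriv_const x 0
    simp [hd]
  -- main case: nonempty compact support
  have hne : (tsupport u).Nonempty := nonempty_iff_ne_empty.mpr hKe
  have hK : IsCompact (tsupport u) := hsupp
  set a := sInf (tsupport u) with ha_def
  set b := sSup (tsupport u) with hb_def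
  have haK : a ∈ tsupport u := hK.sInf_mem hne
  have ha : 0 < a := hsupp' haK
  have hab : a ≤ b := le_csSup hK.bddAbove haK
  have hsub : tsupport u ⊆ Icc a b := fun x hx =>
    ⟨csInf_le hK.bddBelow hx, le_csSup hK.bddAbove hx⟩
  set s := a / 2 with hs_def
  set t := b + 1 with ht_def
  have hs : 0 < s := by positivity
  have hst : s < t := by
    have : a / 2 < a := by linarith
    simp only [hs_def, ht_def]; linarith
  have hu0 : ∀ x, x ∉ Icc a b → u x = 0 := fun x hx =>
    image_eq_zero_of_notMem_tsupport fun h => hx (hsub h)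
  have hd0 : ∀ x, x ∉ Icc a b → deriv u x = 0 := by
    intro x hx
    by_contra h
    exact hx (hsub (support_deriv_subset (by simpa [Function.mem_support] using h)))
  have hcu : Continuous u := hu.continuous
  have hcd : Continuous (deriv u) := hu.continuous_deriv le_rfl
  have hxpos : ∀ x ∈ Icc s t, (0:ℝ) < x := fun x hx => lt_of_lt_of_le hs hx.1
  have hrp : ∀ c : ℝ, ContinuousOn (fun x : ℝ => x ^ c) (Icc s t) := fun c x hx =>
    (Real.continuousAt_rpow_const x c (Or.inl (hxpos x hx).ne')).continuousWithinAt
  -- integrability of the three integrands on [s,t]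
  have hi1 : IntervalIntegrable (fun x => x ^ (-2 * l - 1) * ‖u x‖ ^ 2) volume s t := by
    apply ContinuousOn.intervalIntegrable
    rw [uIcc_of_le hst.le]
    exact (hrp _).mul ((hcu.norm.pow 2).continuousOn)
  have hi2 : IntervalIntegrable (fun x => x ^ (-2 * l + 1) * ‖deriv u x‖ ^ 2) volume s t := by
    apply ContinuousOn.intervalIntegrable
    rw [uIcc_of_le hst.le]
    exact (hrp _).mul ((hcd.norm.pow 2).continuousOn)
  have hig : IntervalIntegrable
      (fun x => x ^ (-2 * l) *
        (2 * ((u x).re * (deriv u x).re + (u x).im * (deriv u x).im))) volume s t := by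
    apply ContinuousOn.intervalIntegrable
    rw [uIcc_of_le hst.le]
    refine (hrp _).mul (Continuous.continuousOn ?_)
    exact continuous_const.mul
      (((Complex.continuous_re.comp hcu).mul (Complex.continuous_re.comp hcd)).add
        ((Complex.continuous_im.comp hcu).mul (Complex.continuous_im.comp hcd)))
  -- the two Ioi integrals reduce to interval integrals
  have hnmem : ∀ x, x ∈ Ioi (0:ℝ) \ Ioc s t → x ∉ Icc a b := by
    rintro x ⟨hx1, hx2⟩ ⟨hxa, hxb⟩
    rw [mem_Ioc, not_and_or] at hx2
    rcases hx2 with h | h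
    · push_neg at h
      have : a / 2 < a := by linarith
      simp only [hs_def] at h; linarith
    · push_neg at h
      simp only [ht_def] at h; linarith
  have hAeq : ∫ x in Set.Ioi (0:ℝ), x ^ (-2 * l - 1) * ‖u x‖ ^ 2
      = ∫ x in s..t, x ^ (-2 * l - 1) * ‖u x‖ ^ 2 := by
    rw [intervalIntegral.integral_of_le hst.le]
    exact setIntegral_eq_of_subset_of_forall_diff_eq_zero measurableSet_Ioi
      (fun x hx => lt_trans hs hx.1)
      (fun x hx => by rw [hu0 x (hnmem x hx)]; simp)
  have hBeq : ∫ x in Set.Ioi (0:ℝ), x ^ (-2 * l + 1) * ‖deriv u x‖ ^ 2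
      = ∫ x in s..t, x ^ (-2 * l + 1) * ‖deriv u x‖ ^ 2 := by
    rw [intervalIntegral.integral_of_le hst.le]
    exact setIntegral_eq_of_subset_of_forall_diff_eq_zero measurableSet_Ioi
      (fun x hx => lt_trans hs hx.1)
      (fun x hx => by rw [hd0 x (hnmem x hx)]; simp)
  -- fundamental theorem of calculus for F x = x^(-2l) ‖u x‖²
  have hderivF : ∀ x ∈ uIcc s t, HasDerivAt (fun y => y ^ (-2 * l) * ‖u y‖ ^ 2)
      ((-2 * l) * (x ^ (-2 * l - 1) * ‖u x‖ ^ 2)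
        + x ^ (-2 * l) * (2 * ((u x).re * (deriv u x).re + (u x).im * (deriv u x).im))) x := by
    rw [uIcc_of_le hst.le]
    intro x hx
    have hx0 : 0 < x := hxpos x hx
    have hdu : HasDerivAt u (deriv u x) x := (hu.differentiable one_ne_zero x).hasDerivAt
    have hre : HasDerivAt (fun y => (u y).re) ((deriv u x).re) x :=
      Complex.reCLM.hasFDerivAt.comp_hasDerivAt x hdu
    have him : HasDerivAt (fun y => (u y).im) ((deriv u x).im) x :=
      Complex.imCLM.hasFDerivAt.comp_hasDerivAt x hdu
    have hN : HasDerivAt (fun y => ‖u y‖ ^ 2)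
        (2 * ((u x).re * (deriv u x).re + (u x).im * (deriv u x).im)) x := by
      have heq : (fun y => ‖u y‖ ^ 2) = fun y => (u y).re ^ 2 + (u y).im ^ 2 := by
        funext y; rw [Complex.sq_norm, Complex.normSq_apply]; ring
      rw [heq]
      have h2 := (hre.pow 2).add (him.pow 2)
      exact h2.congr_deriv (by push_cast; ring)
    have hP : HasDerivAt (fun y : ℝ => y ^ (-2 * l)) ((-2 * l) * x ^ (-2 * l - 1)) x :=
      Real.hasDerivAt_rpow_const (Or.inl hx0.ne')
    have hmul := hP.mul hN
    exact hmul.congr_deriv (by ring)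
  have hiF : IntervalIntegrable (fun x =>
      (-2 * l) * (x ^ (-2 * l - 1) * ‖u x‖ ^ 2)
        + x ^ (-2 * l) * (2 * ((u x).re * (deriv u x).re + (u x).im * (deriv u x).im)))
      volume s t := (hi1.const_mul _).add hig
  have hftc : ∫ x in s..t,
      ((-2 * l) * (x ^ (-2 * l - 1) * ‖u x‖ ^ 2)
        + x ^ (-2 * l) * (2 * ((u x).re * (deriv u x).re + (u x).im * (deriv u x).im))) = 0 := by
    rw [intervalIntegral.integral_eq_sub_of_hasDerivAt hderivF hiF]
    have hts : t ∉ Icc a b := by simp only [ht_def]; intro h; linarith [h.2]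
    have hss : s ∉ Icc a b := by
      simp only [hs_def]; intro h; linarith [h.1]
    rw [hu0 t hts, hu0 s hss]; simp
  -- split the integral
  set I1 := ∫ x in s..t, x ^ (-2 * l - 1) * ‖u x‖ ^ 2 with hI1_def
  set I2 := ∫ x in s..t, x ^ (-2 * l + 1) * ‖deriv u x‖ ^ 2 with hI2_def
  have hsplit : (∫ x in s..t, x ^ (-2 * l) *
      (2 * ((u x).re * (deriv u x).re + (u x).im * (deriv u x).im))) = 2 * l * I1 := by
    rw [intervalIntegral.integral_add (hi1.const_mul _) hig,
      intervalIntegral.integral_const_mul] at hftc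
    rw [hI1_def]; linarith
  -- pointwise bound
  set m := |l| with hm_def
  have hm : 0 < m := abs_pos.mpr hl
  have hbound : ∀ x ∈ Icc s t,
      |x ^ (-2 * l) * (2 * ((u x).re * (deriv u x).re + (u x).im * (deriv u x).im))|
        ≤ m * (x ^ (-2 * l - 1) * ‖u x‖ ^ 2) + m⁻¹ * (x ^ (-2 * l + 1) * ‖deriv u x‖ ^ 2) := by
    intro x hx
    have hx0 : 0 < x := hxpos x hx
    have hP0 : (0:ℝ) ≤ x ^ (-2 * l) := Real.rpow_nonneg hx0.le _
    have hw : |(u x).re * (deriv u x).re + (u x).im * (deriv u x).im|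
        ≤ ‖u x‖ * ‖deriv u x‖ := by
      have heq : (u x).re * (deriv u x).re + (u x).im * (deriv u x).im
          = ((starRingEnd ℂ) (u x) * deriv u x).re := by simp [Complex.mul_re]
      rw [heq]
      calc |((starRingEnd ℂ) (u x) * deriv u x).re|
          ≤ ‖(starRingEnd ℂ) (u x) * deriv u x‖ := Complex.abs_re_le_norm _
        _ = ‖u x‖ * ‖deriv u x‖ := by rw [norm_mul, Complex.norm_conj]
    have step1 : |x ^ (-2 * l) * (2 * ((u x).re * (deriv u x).re + (u x).im * (deriv u x).im))|
        ≤ x ^ (-2 * l) * (2 * (‖u x‖ * ‖deriv u x‖)) := by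
      rw [abs_mul, abs_of_nonneg hP0, abs_mul, abs_two]
      exact mul_le_mul_of_nonneg_left (by linarith) hP0
    refine step1.trans ?_
    have hr1 : (0:ℝ) ≤ x ^ (-2 * l - 1) := Real.rpow_nonneg hx0.le _
    have hr2 : (0:ℝ) ≤ x ^ (-2 * l + 1) := Real.rpow_nonneg hx0.le _
    set p := Real.sqrt (x ^ (-2 * l - 1)) * ‖u x‖ with hp_def
    set q := Real.sqrt (x ^ (-2 * l + 1)) * ‖deriv u x‖ with hq_def
    have hp2 : p ^ 2 = x ^ (-2 * l - 1) * ‖u x‖ ^ 2 := by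
      rw [hp_def, mul_pow, Real.sq_sqrt hr1]
    have hq2 : q ^ 2 = x ^ (-2 * l + 1) * ‖deriv u x‖ ^ 2 := by
      rw [hq_def, mul_pow, Real.sq_sqrt hr2]
    have hrmul : x ^ (-2 * l - 1) * x ^ (-2 * l + 1) = (x ^ (-2 * l)) ^ 2 := by
      rw [← Real.rpow_add hx0, ← Real.rpow_natCast (x ^ (-2 * l)) 2, ← Real.rpow_mul hx0.le]
      norm_num; ring_nf
    have hpq : p * q = x ^ (-2 * l) * (‖u x‖ * ‖deriv u x‖) := by
      calc p * q = Real.sqrt (x ^ (-2 * l - 1) * x ^ (-2 * l + 1)) * (‖u x‖ * ‖deriv u x‖) := by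
            rw [hp_def, hq_def, Real.sqrt_mul hr1]; ring
        _ = x ^ (-2 * l) * (‖u x‖ * ‖deriv u x‖) := by rw [hrmul, Real.sqrt_sq hP0]
    calc x ^ (-2 * l) * (2 * (‖u x‖ * ‖deriv u x‖)) = 2 * (p * q) := by rw [hpq]; ring
      _ ≤ m * p ^ 2 + m⁻¹ * q ^ 2 := hardy_amgm m p q hm
      _ = m * (x ^ (-2 * l - 1) * ‖u x‖ ^ 2) + m⁻¹ * (x ^ (-2 * l + 1) * ‖deriv u x‖ ^ 2) := by
          rw [hp2, hq2]
  -- integrate the bound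
  have hmajint : IntervalIntegrable (fun x =>
      m * (x ^ (-2 * l - 1) * ‖u x‖ ^ 2) + m⁻¹ * (x ^ (-2 * l + 1) * ‖deriv u x‖ ^ 2))
      volume s t := (hi1.const_mul _).add (hi2.const_mul _)
  have hIg_bound : |∫ x in s..t, x ^ (-2 * l) *
      (2 * ((u x).re * (deriv u x).re + (u x).im * (deriv u x).im))| ≤ m * I1 + m⁻¹ * I2 := by
    calc |∫ x in s..t, x ^ (-2 * l) *
        (2 * ((u x).re * (deriv u x).re + (u x).im * (deriv u x).im))|
        ≤ ∫ x in s..t, |x ^ (-2 * l) *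
          (2 * ((u x).re * (deriv u x).re + (u x).im * (deriv u x).im))| :=
          intervalIntegral.abs_integral_le_integral_abs hst.le
      _ ≤ ∫ x in s..t, (m * (x ^ (-2 * l - 1) * ‖u x‖ ^ 2)
            + m⁻¹ * (x ^ (-2 * l + 1) * ‖deriv u x‖ ^ 2)) :=
          intervalIntegral.integral_mono_on hst.le hig.abs hmajint hbound
      _ = m * I1 + m⁻¹ * I2 := by
          rw [intervalIntegral.integral_add (hi1.const_mul _) (hi2.const_mul _),
            intervalIntegral.integral_const_mul, intervalIntegral.integral_const_mul]
  have hI1nn : 0 ≤ I1 :=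
    intervalIntegral.integral_nonneg hst.le fun x hx =>
      mul_nonneg (Real.rpow_nonneg (hxpos x hx).le _) (by positivity)
  -- conclude
  rw [hsplit] at hIg_bound
  have habs : |2 * l * I1| = 2 * m * I1 := by
    rw [abs_mul, abs_mul, abs_two, abs_of_nonneg hI1nn, hm_def]
  rw [habs] at hIg_bound
  have hkey : m * I1 ≤ m⁻¹ * I2 := by linarith
  have hm' : m ≠ 0 := hm.ne'
  have hfin : I1 ≤ m⁻¹ * (m⁻¹ * I2) := by
    calc I1 = m⁻¹ * (m * I1) := by field_simp
      _ ≤ m⁻¹ * (m⁻¹ * I2) := mul_le_mul_of_nonneg_left hkey (inv_nonneg.mpr hm.le)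
  have hmm : m⁻¹ * m⁻¹ = 1 / l ^ 2 := by
    rw [hm_def, ← mul_inv, ← sq, sq_abs, one_div]
  rw [hAeq, hBeq]
  calc I1 ≤ m⁻¹ * (m⁻¹ * I2) := hfin
    _ = 1 / l ^ 2 * I2 := by rw [← mul_assoc, hmm]
end
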